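/- Let α and β be finite index types with β of cardinality d, let σ : Matrix (α × β) (α × β) ℂ be a density matrix, and let f₁, ..., f_m be a generalized measurement on the first factor, i.e., matrices in Matrix α α ℂ with ∑_{j=1}^m f_jᴴ f_j = I. Then the expected spectrum of Bob's local state after Alice's measurement majorizes the spectrum of Bob's current local state: for every k with 1 ≤ k ≤ d, ∑_{j=1}^{m} ∑_{i=1}^{k} λ_i(Tr₁((f_j ⊗ I) * σ * (f_j ⊗ I)ᴴ)) ≥ ∑_{i=1}^{k} λ_i(Tr₁(σ)). -/

import Mathlib

open Matrix Kronecker ComplexOrder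

/-- Partial trace over the first tensor factor. -/
noncomputable def ptrace1 {α β : Type*} [Fintype α]
    (M : Matrix (α × β) (α × β) ℂ) : Matrix β β ℂ :=
  Matrix.of fun i j => ∑ k : α, M (k, i) (k, j)


lemma filter_lt_eq_map {d k : ℕ} (hk : k ≤ d) :
    Finset.univ.filter (fun i : Fin d => (i : ℕ) < k)
      = Finset.univ.map (Fin.castLEEmb hk) := by
  ext i
  simp only [Finset.mem_filter, Finset.mem_univ, true_and, Finset.mem_map,
    Fin.castLEEmb_apply]
  constructor
  · intro h; exact ⟨⟨i, h⟩, rfl⟩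
  · rintro ⟨j, rfl⟩; exact j.isLt

lemma sum_topk {d k : ℕ} (hk : k ≤ d) {M : Type*} [AddCommMonoid M] (g : Fin d → M) :
    ∑ i ∈ Finset.univ.filter (fun i : Fin d => (i : ℕ) < k), g i
      = ∑ i : Fin k, g (Fin.castLE hk i) := by
  rw [filter_lt_eq_map hk, Finset.sum_map]; rfl

lemma sum_mul_le_topk {d k : ℕ} (hk1 : 1 ≤ k) (hk : k ≤ d) (μ t : Fin d → ℝ)
    (hμ : Antitone μ) (ht0 : ∀ i, 0 ≤ t i) (ht1 : ∀ i, t i ≤ 1)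
    (hsum : ∑ i, t i = k) :
    ∑ i, μ i * t i ≤ ∑ i : Fin k, μ (Fin.castLE hk i) := by
  have hkd : k - 1 < d := lt_of_lt_of_le (Nat.sub_lt hk1 one_pos) hk
  set c := μ ⟨k - 1, hkd⟩ with hc
  set p := fun i : Fin d => (i : ℕ) < k with hp
  have hsplit := Finset.sum_filter_add_sum_filter_not Finset.univ p (fun i => μ i * t i)
  have hsplitt := Finset.sum_filter_add_sum_filter_not Finset.univ p t
  have hcard : ∑ i ∈ Finset.univ.filter p, (1 : ℝ) = (k : ℝ) := by
    rw [sum_topk hk (fun _ => (1:ℝ))]; simp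
  have hA : ∑ i ∈ Finset.univ.filter p, μ i * t i
      ≤ ∑ i ∈ Finset.univ.filter p, (μ i + c * (t i - 1)) := by
    apply Finset.sum_le_sum
    intro i hi
    have hik : (i : ℕ) < k := (Finset.mem_filter.mp hi).2
    have hμi : c ≤ μ i := hμ (by rw [Fin.le_def]; simp; omega)
    nlinarith [ht1 i, ht0 i]
  have hB : ∑ i ∈ Finset.univ.filter (fun i => ¬ p i), μ i * t i
      ≤ ∑ i ∈ Finset.univ.filter (fun i => ¬ p i), c * t i := by
    apply Finset.sum_le_sum
    intro i hi
    have hik : ¬ (i : ℕ) < k := (Finset.mem_filter.mp hi).2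
    have hμi : μ i ≤ c := hμ (by rw [Fin.le_def]; simp; omega)
    nlinarith [ht0 i]
  have e1 : ∑ i ∈ Finset.univ.filter p, (μ i + c * (t i - 1))
      = ∑ i ∈ Finset.univ.filter p, μ i + c * (∑ i ∈ Finset.univ.filter p, t i) - c * k := by
    rw [Finset.sum_add_distrib]
    rw [show (fun i => c * (t i - 1)) = fun i => c * t i - c * 1 by funext i; ring]
    rw [Finset.sum_sub_distrib, ← Finset.mul_sum, ← Finset.mul_sum, hcard]
    ring
  have e2 : ∑ i ∈ Finset.univ.filter (fun i => ¬ p i), c * t i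
      = c * ∑ i ∈ Finset.univ.filter (fun i => ¬ p i), t i := by
    rw [Finset.mul_sum]
  rw [← sum_topk hk μ]
  have := hsum
  rw [← hsplitt] at this
  simp only [hp] at hA hB e1 e2 hsplit hsplitt this hcard ⊢
  have e3 : c * (∑ x ∈ Finset.univ.filter (fun i : Fin d => (i : ℕ) < k), t x)
      + c * (∑ x ∈ Finset.univ.filter (fun i : Fin d => ¬ (i : ℕ) < k), t x) = c * k := by
    rw [← mul_add, this]
  linarith [hA, hB, e1, e2, hsplit, e3]

lemma proj_diag_mem {β : Type*} [Fintype β] {Q : Matrix β β ℂ}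
    (hQ : Qᴴ = Q) (hQ2 : Q * Q = Q) (b : β) :
    (Q b b).im = 0 ∧ 0 ≤ (Q b b).re := by
  have h : Q b b = ∑ c, Q b c * star (Q b c) := by
    conv_lhs => rw [← hQ2]
    rw [Matrix.mul_apply]
    refine Finset.sum_congr rfl fun c _ => ?_
    have hcb : Q c b = star (Q b c) := by
      conv_lhs => rw [← hQ, Matrix.conjTranspose_apply]
    rw [hcb]
  have h2 : Q b b = ((∑ c, Complex.normSq (Q b c) : ℝ) : ℂ) := by
    rw [h]; push_cast
    exact Finset.sum_congr rfl fun c _ => Complex.mul_conj _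
  rw [h2]
  constructor
  · simp
  · simp only [Complex.ofReal_re]
    exact Finset.sum_nonneg fun c _ => Complex.normSq_nonneg _

lemma trace_proj_le {β : Type*} [Fintype β] [DecidableEq β]
    {A : Matrix β β ℂ} (hA : A.IsHermitian) {P : Matrix β β ℂ}
    (hP : Pᴴ = P) (hP2 : P * P = P) {k : ℕ} (hk1 : 1 ≤ k) (hk : k ≤ Fintype.card β)
    (htr : P.trace = (k : ℂ))
    (μ : Fin (Fintype.card β) → ℝ) (hμ : Antitone μ)
    (e : β ≃ Fin (Fintype.card β)) (he : ∀ i, μ (e i) = hA.eigenvalues i) :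
    (P * A).trace.re ≤ ∑ i : Fin k, μ (Fin.castLE hk i) := by
  set U : Matrix β β ℂ := (hA.eigenvectorUnitary : Matrix β β ℂ) with hU
  have hUU : star U * U = 1 := (Matrix.mem_unitaryGroup_iff'.mp hA.eigenvectorUnitary.2)
  have hUU' : U * star U = 1 := (Matrix.mem_unitaryGroup_iff.mp hA.eigenvectorUnitary.2)
  set Λ : Matrix β β ℂ := Matrix.diagonal (RCLike.ofReal ∘ hA.eigenvalues)
  set Q : Matrix β β ℂ := star U * P * U with hQdef
  have hQH : Qᴴ = Q := by
    simp only [hQdef, Matrix.conjTranspose_mul, Matrix.conjTranspose_mul,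
      Matrix.star_eq_conjTranspose, Matrix.conjTranspose_conjTranspose, hP]
    rw [Matrix.mul_assoc]
  have hQ2 : Q * Q = Q := by
    simp only [hQdef]
    calc star U * P * U * (star U * P * U)
        = star U * (P * (U * star U) * P) * U := by
          simp only [Matrix.mul_assoc]
      _ = star U * (P * P) * U := by rw [hUU', Matrix.mul_one]
      _ = star U * P * U := by rw [hP2]
  have hQtr : Q.trace = (k : ℂ) := by
    rw [hQdef, Matrix.trace_mul_comm, ← Matrix.mul_assoc, hUU', Matrix.one_mul, htr]
  have htrPA : (P * A).trace = (Q * Λ).trace := by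
    conv_lhs => rw [hA.spectral_theorem, Unitary.conjStarAlgAut_apply]
    rw [show P * (U * Λ * star U) = (P * U * Λ) * star U by simp [Matrix.mul_assoc]]
    rw [Matrix.trace_mul_comm]
    simp only [hQdef, Matrix.mul_assoc]
  have htrQΛ : (Q * Λ).trace = ∑ b, Q b b * ((hA.eigenvalues b : ℝ) : ℂ) := by
    simp [Matrix.trace, Matrix.diag, Λ, Matrix.mul_diagonal]
  set t : β → ℝ := fun b => (Q b b).re with ht
  have hmem : ∀ b, (Q b b).im = 0 ∧ 0 ≤ (Q b b).re := fun b => proj_diag_mem hQH hQ2 b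
  have ht1 : ∀ b, t b ≤ 1 := by
    intro b
    have h1 : (1 - Q)ᴴ = 1 - Q := by simp [hQH]
    have h2 : (1 - Q) * (1 - Q) = 1 - Q := by
      simp [Matrix.mul_sub, Matrix.sub_mul, hQ2]
    have := (proj_diag_mem h1 h2 b).2
    simp only [Matrix.sub_apply, Matrix.one_apply_eq, Complex.sub_re, Complex.one_re] at this
    simpa [ht] using by linarith
  have htsum : ∑ b, t b = k := by
    have := hQtr
    rw [Matrix.trace] at this
    have := congrArg Complex.re this
    simpa [Matrix.diag, Complex.re_sum, ht] using this
  have hre : (P * A).trace.re = ∑ b, t b * μ (e b) := by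
    rw [htrPA, htrQΛ]
    rw [Complex.re_sum]
    refine Finset.sum_congr rfl fun b _ => ?_
    rw [he b, Complex.mul_re]
    simp [(hmem b).1, ht]
  rw [hre]
  have := sum_mul_le_topk hk1 hk μ (fun i => t (e.symm i)) hμ
    (fun i => (hmem (e.symm i)).2) (fun i => ht1 (e.symm i))
    (by rw [← htsum]; exact Equiv.sum_comp e.symm t)
  calc ∑ b, t b * μ (e b)
      = ∑ i : Fin (Fintype.card β), μ i * t (e.symm i) := by
        rw [← Equiv.sum_comp e (fun i => μ i * t (e.symm i))]
        exact Finset.sum_congr rfl fun b _ => by rw [e.symm_apply_apply]; ring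
    _ ≤ _ := this

lemma ptrace1_mul_comm {α β : Type*} [Fintype α] [Fintype β] [DecidableEq β]
    (g : Matrix α α ℂ) (M : Matrix (α × β) (α × β) ℂ) :
    ptrace1 ((g ⊗ₖ (1 : Matrix β β ℂ)) * M) = ptrace1 (M * (g ⊗ₖ (1 : Matrix β β ℂ))) := by
  ext i j
  simp only [ptrace1, Matrix.of_apply, Matrix.mul_apply, Fintype.sum_prod_type,
    Matrix.kroneckerMap_apply, Matrix.one_apply, mul_ite, mul_zero, mul_one,
    ite_mul, zero_mul, Finset.sum_ite_eq, Finset.sum_ite_eq', Finset.mem_univ, if_true]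
  rw [Finset.sum_comm]
  exact Finset.sum_congr rfl fun _ _ => Finset.sum_congr rfl fun _ _ => mul_comm _ _

lemma ptrace1_sum {α β : Type*} [Fintype α] {m : ℕ}
    (M : Fin m → Matrix (α × β) (α × β) ℂ) :
    ptrace1 (∑ j, M j) = ∑ j, ptrace1 (M j) := by
  ext i j
  simp only [ptrace1, Matrix.of_apply, Matrix.sum_apply]
  rw [Finset.sum_comm]

lemma kron_conjTranspose {α β : Type*} (A : Matrix α α ℂ) (B : Matrix β β ℂ) :
    (A ⊗ₖ B)ᴴ = Aᴴ ⊗ₖ Bᴴ := by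
  ext ⟨i, k⟩ ⟨j, l⟩
  simp [Matrix.conjTranspose_apply, Matrix.kroneckerMap_apply, star_mul', mul_comm]

lemma sum_ptrace1_meas {α β : Type*} [Fintype α] [Fintype β] [DecidableEq α] [DecidableEq β]
    {m : ℕ} (σ : Matrix (α × β) (α × β) ℂ) (f : Fin m → Matrix α α ℂ)
    (hf : ∑ j : Fin m, (f j)ᴴ * f j = 1) :
    ∑ j : Fin m, ptrace1 ((f j ⊗ₖ (1 : Matrix β β ℂ)) * σ * (f j ⊗ₖ (1 : Matrix β β ℂ))ᴴ)
      = ptrace1 σ := by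
  have step : ∀ j, ptrace1 ((f j ⊗ₖ (1 : Matrix β β ℂ)) * σ * (f j ⊗ₖ (1 : Matrix β β ℂ))ᴴ)
      = ptrace1 (σ * ((((f j)ᴴ * f j) ⊗ₖ (1 : Matrix β β ℂ)))) := by
    intro j
    rw [Matrix.mul_assoc, ptrace1_mul_comm]
    congr 1
    rw [Matrix.mul_assoc]
    congr 1
    rw [kron_conjTranspose, Matrix.conjTranspose_one, ← Matrix.mul_kronecker_mul, Matrix.one_mul]
  simp only [step]
  rw [← ptrace1_sum]
  congr 1
  rw [← Finset.mul_sum]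
  have hsum : ∑ i : Fin m, (((f i)ᴴ * f i) ⊗ₖ (1 : Matrix β β ℂ))
      = (∑ i : Fin m, (f i)ᴴ * f i) ⊗ₖ (1 : Matrix β β ℂ) := by
    ext ⟨a, b⟩ ⟨c, d⟩
    simp [Matrix.sum_apply, Matrix.kroneckerMap_apply, Finset.sum_mul]
  rw [hsum, hf, Matrix.one_kronecker_one, Matrix.mul_one]

lemma trace_proj_eq {β : Type*} [Fintype β] [DecidableEq β]
    {A : Matrix β β ℂ} (hA : A.IsHermitian) {k : ℕ} (hk : k ≤ Fintype.card β)
    (ν : Fin (Fintype.card β) → ℝ) (e : β ≃ Fin (Fintype.card β))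
    (he : ∀ i, ν (e i) = hA.eigenvalues i) :
    ∃ P : Matrix β β ℂ, Pᴴ = P ∧ P * P = P ∧ P.trace = (k : ℂ) ∧
      (P * A).trace.re = ∑ i : Fin k, ν (Fin.castLE hk i) := by
  set U : Matrix β β ℂ := (hA.eigenvectorUnitary : Matrix β β ℂ) with hU
  have hUU : star U * U = 1 := (Matrix.mem_unitaryGroup_iff'.mp hA.eigenvectorUnitary.2)
  have hUU' : U * star U = 1 := (Matrix.mem_unitaryGroup_iff.mp hA.eigenvectorUnitary.2)
  set Λ : Matrix β β ℂ := Matrix.diagonal (RCLike.ofReal ∘ hA.eigenvalues) with hΛ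
  set dfun : β → ℂ := fun b => if ((e b : ℕ)) < k then 1 else 0 with hdfun
  set D : Matrix β β ℂ := Matrix.diagonal dfun with hD
  have hstar : star dfun = dfun := by
    funext b
    simp only [Pi.star_apply, hdfun]
    split <;> simp
  have hmul : dfun * dfun = dfun := by
    funext b
    simp only [Pi.mul_apply, hdfun]
    split <;> simp
  have hDH : Dᴴ = D := by rw [hD, Matrix.diagonal_conjTranspose, hstar]
  have hDD : D * D = D := by
    rw [hD, Matrix.diagonal_mul_diagonal]
    exact congrArg Matrix.diagonal (funext fun b => by simp only [hdfun]; split <;> simp)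
  refine ⟨U * D * star U, ?_, ?_, ?_, ?_⟩
  · simp only [Matrix.conjTranspose_mul, Matrix.star_eq_conjTranspose,
      Matrix.conjTranspose_conjTranspose, hDH]
    rw [Matrix.mul_assoc]
  · calc U * D * star U * (U * D * star U)
        = U * (D * (star U * U) * D) * star U := by simp only [Matrix.mul_assoc]
      _ = U * (D * D) * star U := by rw [hUU, Matrix.mul_one]
      _ = U * D * star U := by rw [hDD]
  · rw [Matrix.trace_mul_comm, ← Matrix.mul_assoc, hUU, Matrix.one_mul]
    rw [hD, Matrix.trace_diagonal]
    rw [← Equiv.sum_comp e.symm dfun]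
    have hds : ∀ i : Fin (Fintype.card β), dfun (e.symm i) = if (i : ℕ) < k then 1 else 0 := by
      intro i; simp [hdfun]
    simp only [hds]
    rw [← Finset.sum_filter, sum_topk hk (fun _ => (1 : ℂ))]
    simp
  · have h1 : (U * D * star U * A).trace = (D * Λ).trace := by
      conv_lhs => rw [hA.spectral_theorem, Unitary.conjStarAlgAut_apply]
      have hc : U * D * star U * (U * Λ * star U) = U * (D * Λ) * star U := by
        calc U * D * star U * (U * Λ * star U)
            = U * (D * ((star U * U) * (Λ * star U))) := by simp only [Matrix.mul_assoc]
          _ = U * (D * Λ) * star U := by rw [hUU, Matrix.one_mul]; simp only [Matrix.mul_assoc]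
      rw [hc, Matrix.trace_mul_comm, ← Matrix.mul_assoc, hUU, Matrix.one_mul]
    have h2 : (D * Λ).trace = ∑ b, dfun b * ((hA.eigenvalues b : ℝ) : ℂ) := by
      rw [hD, hΛ, Matrix.diagonal_mul_diagonal, Matrix.trace_diagonal]
      rfl
    have h3 : ∀ b, (dfun b * ((hA.eigenvalues b : ℝ) : ℂ)).re
        = (fun i : Fin (Fintype.card β) => if (i : ℕ) < k then ν i else 0) (e b) := by
      intro b
      simp only [hdfun]
      split <;> simp [he b]
    rw [h1, h2, Complex.re_sum]
    simp only [h3]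
    rw [Equiv.sum_comp e (fun i : Fin (Fintype.card β) => if (i : ℕ) < k then ν i else 0)]
    rw [← Finset.sum_filter, sum_topk hk ν]

/-- The expected spectrum of Bob's local state after Alice's generalized measurement
majorizes the spectrum of Bob's current local state. -/
theorem expected_spectrum_majorizes_other {α β : Type*}
    [Fintype α] [Fintype β] [DecidableEq α] [DecidableEq β] {m : ℕ}
    (σ : Matrix (α × β) (α × β) ℂ) (hσ : σ.PosSemidef) (hσtr : σ.trace = 1)
    (f : Fin m → Matrix α α ℂ)
    (hf : ∑ j : Fin m, (f j)ᴴ * f j = 1)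
    (hherm : ∀ j, (ptrace1 ((f j ⊗ₖ (1 : Matrix β β ℂ)) * σ *
      (f j ⊗ₖ (1 : Matrix β β ℂ))ᴴ)).IsHermitian)
    (hherm0 : (ptrace1 σ).IsHermitian)
    (μ : Fin m → Fin (Fintype.card β) → ℝ) (hμa : ∀ j, Antitone (μ j))
    (hμp : ∀ j, ∃ e : β ≃ Fin (Fintype.card β), ∀ i, μ j (e i) = (hherm j).eigenvalues i)
    (ν : Fin (Fintype.card β) → ℝ) (hνa : Antitone ν)
    (hνp : ∃ e : β ≃ Fin (Fintype.card β), ∀ i, ν (e i) = hherm0.eigenvalues i) :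
    ∀ (k : ℕ), 1 ≤ k → ∀ (hk : k ≤ Fintype.card β),
      ∑ i : Fin k, ν (Fin.castLE hk i) ≤
        ∑ j : Fin m, ∑ i : Fin k, μ j (Fin.castLE hk i) := by
  intro k hk1 hk
  obtain ⟨e, he⟩ := hνp
  obtain ⟨P, hPH, hP2, hPtr, hPeq⟩ := trace_proj_eq hherm0 hk ν e he
  have hsum : ∑ j : Fin m, ptrace1 ((f j ⊗ₖ (1 : Matrix β β ℂ)) * σ *
      (f j ⊗ₖ (1 : Matrix β β ℂ))ᴴ) = ptrace1 σ := sum_ptrace1_meas σ f hf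
  have htr : (P * ptrace1 σ).trace = ∑ j : Fin m, (P * ptrace1 ((f j ⊗ₖ (1 : Matrix β β ℂ)) * σ *
      (f j ⊗ₖ (1 : Matrix β β ℂ))ᴴ)).trace := by
    rw [← hsum, Finset.mul_sum, Matrix.trace_sum]
  rw [← hPeq, htr, Complex.re_sum]
  apply Finset.sum_le_sum
  intro j _
  obtain ⟨e', he'⟩ := hμp j
  exact trace_proj_le (hherm j) hPH hP2 hk1 hk hPtr (μ j) (hμa j) e' he'
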